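/- Let μ, δ ∈ (0, π/2) with μ < δ, and μ* ∈ (μ, π/2). Define F(y) = (y cos μ* cot μ + sin μ*)/√(1 + (1−y²)cot²δ + y² cot²μ) for y ∈ [0,1]. Then F attains its maximum on [0, ∞) at y_M = cot μ · cos μ* · (1 + cot²δ) / (sin μ* · (cot²μ − cot²δ)), and F is increasing on [0, y_M]. -/
import Mathlib

private lemma sqrt_cmp (N1 N2 Q1 Q2 : ℝ) (hN1 : 0 ≤ N1) (hN2 : 0 ≤ N2)
    (hQ1 : 0 < Q1) (hQ2 : 0 < Q2) (h : N1 ^ 2 * Q2 ≤ N2 ^ 2 * Q1) :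
    N1 / Real.sqrt Q1 ≤ N2 / Real.sqrt Q2 := by
  rw [div_le_div_iff₀ (Real.sqrt_pos.2 hQ1) (Real.sqrt_pos.2 hQ2)]
  have e1 : N1 * Real.sqrt Q2 = Real.sqrt (N1 ^ 2 * Q2) := by
    rw [Real.sqrt_mul (sq_nonneg N1), Real.sqrt_sq hN1]
  have e2 : N2 * Real.sqrt Q1 = Real.sqrt (N2 ^ 2 * Q1) := by
    rw [Real.sqrt_mul (sq_nonneg N2), Real.sqrt_sq hN2]
  rw [e1, e2]
  exact Real.sqrt_le_sqrt h

private lemma key (u s A B yM : ℝ) (hu : 0 < u) (hs : 0 < s) (hA : 0 < A) (hB : 0 < B)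
    (hyM : s * B * yM = u * A) :
    (∀ y1 y2, 0 ≤ y1 → y1 ≤ y2 → y2 ≤ yM →
      (u * y1 + s) / Real.sqrt (A + B * y1 ^ 2) ≤ (u * y2 + s) / Real.sqrt (A + B * y2 ^ 2))
    ∧ ∀ y, 0 ≤ y → yM ≤ y →
      (u * y + s) / Real.sqrt (A + B * y ^ 2) ≤ (u * yM + s) / Real.sqrt (A + B * yM ^ 2) := by
  have hBs : 0 < B * s := by positivity
  have hyM' : B * s * yM = u * A := by linear_combination hyM
  have hyM0 : 0 ≤ yM := by nlinarith [mul_pos hu hA]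
  constructor
  · intro y1 y2 h0 h12 h2M
    have h1M : y1 ≤ yM := h12.trans h2M
    have hN1 : 0 ≤ u * y1 + s := by nlinarith
    have hN2 : 0 ≤ u * y2 + s := by nlinarith
    have hQ1 : 0 < A + B * y1 ^ 2 := by positivity
    have hQ2 : 0 < A + B * y2 ^ 2 := by positivity
    apply sqrt_cmp _ _ _ _ hN1 hN2 hQ1 hQ2
    have t1 : 0 ≤ u * A - B * s * y1 := by
      nlinarith [mul_le_mul_of_nonneg_left h1M hBs.le]
    have t2 : 0 ≤ u * A - B * s * y2 := by
      nlinarith [mul_le_mul_of_nonneg_left h2M hBs.le]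
    nlinarith [mul_nonneg (mul_nonneg (sub_nonneg.2 h12) t1) hN2,
               mul_nonneg (mul_nonneg (sub_nonneg.2 h12) t2) hN1]
  · intro y hy0 hy
    have hN : 0 ≤ u * y + s := by nlinarith
    have hNM : 0 ≤ u * yM + s := by nlinarith
    have hQ : 0 < A + B * y ^ 2 := by positivity
    have hQM : 0 < A + B * yM ^ 2 := by positivity
    apply sqrt_cmp _ _ _ _ hN hNM hQ hQM
    have t : 0 ≤ B * s * y - u * A := by
      nlinarith [mul_le_mul_of_nonneg_left hy hBs.le]
    have hz2 : (yM - y) * (u * A - B * s * yM) * (u * y + s) = 0 := by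
      rw [show u * A - B * s * yM = 0 from by linarith]; ring
    nlinarith [mul_nonneg (mul_nonneg (sub_nonneg.2 hy) t) hNM, hz2]

open Real in
theorem stmt13 (μ μs δ : ℝ)
    (hμ0 : 0 < μ) (hμδ : μ < δ) (hδ : δ < π / 2) (hμs1 : μ < μs) (hμs2 : μs < π / 2) :
    let cot : ℝ → ℝ := fun x => Real.cos x / Real.sin x
    let F : ℝ → ℝ := fun y =>
      (y * Real.cos μs * cot μ + Real.sin μs) /
        Real.sqrt (1 + (1 - y ^ 2) * cot δ ^ 2 + y ^ 2 * cot μ ^ 2)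
    let yM : ℝ := cot μ * Real.cos μs * (1 + cot δ ^ 2) /
      (Real.sin μs * (cot μ ^ 2 - cot δ ^ 2))
    IsMaxOn F (Set.Ici 0) yM ∧ MonotoneOn F (Set.Icc 0 yM) := by
  intro cot F yM
  have hπ := Real.pi_pos
  have hsμ : 0 < Real.sin μ := Real.sin_pos_of_pos_of_lt_pi hμ0 (by linarith)
  have hcμ : 0 < Real.cos μ := Real.cos_pos_of_mem_Ioo ⟨by linarith, by linarith⟩
  have hδ0 : 0 < δ := lt_trans hμ0 hμδ
  have hsδ : 0 < Real.sin δ := Real.sin_pos_of_pos_of_lt_pi hδ0 (by linarith)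
  have hcδ : 0 < Real.cos δ := Real.cos_pos_of_mem_Ioo ⟨by linarith, by linarith⟩
  have hμs0 : 0 < μs := lt_trans hμ0 hμs1
  have hs : 0 < Real.sin μs := Real.sin_pos_of_pos_of_lt_pi hμs0 (by linarith)
  have hc : 0 < Real.cos μs := Real.cos_pos_of_mem_Ioo ⟨by linarith, by linarith⟩
  have ha : 0 < Real.cos μ / Real.sin μ := div_pos hcμ hsμ
  have hb : 0 < Real.cos δ / Real.sin δ := div_pos hcδ hsδ
  have hba : Real.cos δ / Real.sin δ < Real.cos μ / Real.sin μ := by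
    rw [div_lt_div_iff₀ hsδ hsμ]
    have hsd : 0 < Real.sin (δ - μ) :=
      Real.sin_pos_of_pos_of_lt_pi (by linarith) (by linarith)
    rw [Real.sin_sub] at hsd
    nlinarith
  have hu : 0 < Real.cos μ / Real.sin μ * Real.cos μs := mul_pos ha hc
  have hA : (0 : ℝ) < 1 + (Real.cos δ / Real.sin δ) ^ 2 := by positivity
  have hB : (0 : ℝ) < (Real.cos μ / Real.sin μ) ^ 2 - (Real.cos δ / Real.sin δ) ^ 2 := by
    nlinarith
  have hyMeq : Real.sin μs * ((Real.cos μ / Real.sin μ) ^ 2 - (Real.cos δ / Real.sin δ) ^ 2)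
      * yM = Real.cos μ / Real.sin μ * Real.cos μs * (1 + (Real.cos δ / Real.sin δ) ^ 2) := by
    show Real.sin μs * ((Real.cos μ / Real.sin μ) ^ 2 - (Real.cos δ / Real.sin δ) ^ 2) *
        (Real.cos μ / Real.sin μ * Real.cos μs * (1 + (Real.cos δ / Real.sin δ) ^ 2) /
          (Real.sin μs * ((Real.cos μ / Real.sin μ) ^ 2 - (Real.cos δ / Real.sin δ) ^ 2))) = _
    rw [mul_div_cancel₀]
    exact ne_of_gt (mul_pos hs hB)
  obtain ⟨hmono, hmax⟩ := key (Real.cos μ / Real.sin μ * Real.cos μs) (Real.sin μs)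
    (1 + (Real.cos δ / Real.sin δ) ^ 2)
    ((Real.cos μ / Real.sin μ) ^ 2 - (Real.cos δ / Real.sin δ) ^ 2) yM hu hs hA hB hyMeq
  have hFy : ∀ y, F y = (Real.cos μ / Real.sin μ * Real.cos μs * y + Real.sin μs) /
      Real.sqrt (1 + (Real.cos δ / Real.sin δ) ^ 2 +
        ((Real.cos μ / Real.sin μ) ^ 2 - (Real.cos δ / Real.sin δ) ^ 2) * y ^ 2) := by
    intro y
    show (y * Real.cos μs * (Real.cos μ / Real.sin μ) + Real.sin μs) /
        Real.sqrt (1 + (1 - y ^ 2) * (Real.cos δ / Real.sin δ) ^ 2 +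
          y ^ 2 * (Real.cos μ / Real.sin μ) ^ 2) = _
    rw [show 1 + (1 - y ^ 2) * (Real.cos δ / Real.sin δ) ^ 2 +
          y ^ 2 * (Real.cos μ / Real.sin μ) ^ 2
        = 1 + (Real.cos δ / Real.sin δ) ^ 2 +
          ((Real.cos μ / Real.sin μ) ^ 2 - (Real.cos δ / Real.sin δ) ^ 2) * y ^ 2 from by ring,
        show y * Real.cos μs * (Real.cos μ / Real.sin μ)
          = Real.cos μ / Real.sin μ * Real.cos μs * y from by ring]
  constructor
  · intro y hy
    simp only [Set.mem_Ici] at hy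
    simp only [Set.mem_setOf_eq, hFy]
    rcases le_total y yM with h | h
    · exact hmono y yM hy h le_rfl
    · exact hmax y hy h
  · intro y1 h1 y2 h2 h12
    rw [hFy, hFy]
    exact hmono y1 y2 h1.1 h12 h2.2
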